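/- Let U ⊆ X be an open subset of a spacetime such that for each x,y ∈ U there is at most one timelike homotopy class of timelike paths in U from x to y. Let x,y ∈ U and c a future-directed timelike path in U from x to y with closure(I_U(x,y)) ⊆ U (closure taken in X). Then any timelike homotopy rel endpoints in X starting at c remains entirely inside U; consequently I_X([c]) = I_U(x,y). -/
import Mathlib


open unitInterval

/-- A homotopy rel endpoints between `a` and `b` all of whose stages lie in the
given class `P` of paths. -/
def HtpyThrough {X : Type*} [TopologicalSpace X] (P : ∀ x y : X, Set (Path x y))
    {x y : X} (a b : Path x y) : Prop :=
  ∃ H : Path.Homotopy a b, ∀ s : I, H.eval s ∈ P x y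

/-- The refined diamond `I_X([c])` (resp. `J_X([c])`) of the `P`-homotopy class of `c`. -/
def diam {X : Type*} [TopologicalSpace X] (P : ∀ x y : X, Set (Path x y))
    {x y : X} (c : Path x y) : Set X :=
  {z | ∃ (a : Path x z) (b : Path z y),
    a ∈ P x z ∧ b ∈ P z y ∧ HtpyThrough P (a.trans b) c}

/-- The restriction of a path to `[s,t]`, linearly reparametrized to `[0,1]`. -/
def Path.restrictTo {X : Type*} [TopologicalSpace X] {x y : X} (c : Path x y) (s t : I) :
    Path (c s) (c t) where
  toFun u := c ⟨(1 - (u : ℝ)) * s + u * t, by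
    have hu0 : (0 : ℝ) ≤ u := u.2.1
    have hu1 : (u : ℝ) ≤ 1 := u.2.2
    have hs0 : (0 : ℝ) ≤ s := s.2.1
    have hs1 : (s : ℝ) ≤ 1 := s.2.2
    have ht0 : (0 : ℝ) ≤ t := t.2.1
    have ht1 : (t : ℝ) ≤ 1 := t.2.2
    constructor <;> nlinarith⟩
  continuous_toFun := by
    apply c.continuous.comp
    exact Continuous.subtype_mk (by fun_prop) _
  source' := by simp
  target' := by simp

/-- The chronological diamond `I_U(x,y)` of a subset `U`: points joined to `x`
and `y` by paths of the class `P` lying in `U`. -/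
def diamIn {X : Type*} [TopologicalSpace X] (P : ∀ x y : X, Set (Path x y))
    (U : Set X) (x y : X) : Set X :=
  {z | ∃ (a : Path x z) (b : Path z y),
    a ∈ P x z ∧ b ∈ P z y ∧ (∀ t, a t ∈ U) ∧ (∀ t, b t ∈ U)}


section AuxStmt18

variable {X : Type*} [TopologicalSpace X]

private lemma castMem18 (P : ∀ x y : X, Set (Path x y)) {x x' z z' : X}
    (hx : x' = x) (hz : z' = z) (a : Path x z) (ha : a ∈ P x z) :
    a.cast hx hz ∈ P x' z' := by
  subst hx; subst hz
  have : a.cast rfl rfl = a := by ext t; simp [Path.cast]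
  rwa [this]

private lemma key18 (P : ∀ x y : X, Set (Path x y))
    (hrestrict : ∀ {x y : X} (c : Path x y), c ∈ P x y →
      ∀ s t : I, s < t → c.restrictTo s t ∈ P (c s) (c t))
    (U : Set X) (hUopen : IsOpen U)
    {x y : X} (c : Path x y) (hcU : ∀ t, c t ∈ U)
    (hclos : closure (diamIn P U x y) ⊆ U)
    (d : Path x y) (H : Path.Homotopy c d)
    (hP : ∀ s : I, H.eval s ∈ P x y) : ∀ s t : I, H.eval s t ∈ U := by
  have hx : x ∈ U := by have := hcU 0; rwa [c.source] at this
  have hy : y ∈ U := by have := hcU 1; rwa [c.target] at this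
  set S : Set I := {s : I | ∀ t : I, H.eval s t ∈ U} with hS
  have heq : ∀ s' t' : I, H.eval s' t' = H.toHomotopy (s', t') := fun _ _ => rfl
  have hSopen : IsOpen S := by
    have h1 : S = (⇑(H.toHomotopy.toContinuousMap.curry)) ⁻¹'
        {f : C(I, X) | Set.MapsTo f Set.univ U} := by
      ext s
      simp only [hS, Set.mem_setOf_eq, Set.mem_preimage, Set.mapsTo_univ_iff,
        ContinuousMap.curry_apply]
      exact Iff.rfl
    rw [h1]
    exact (ContinuousMap.isOpen_setOf_mapsTo isCompact_univ hUopen).preimage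
      (map_continuous _)
  have hSclosed : IsClosed S := by
    apply isClosed_of_closure_subset
    intro s hs t
    by_cases ht0 : t = 0
    · subst ht0; rw [(H.eval s).source]; exact hx
    by_cases ht1 : t = 1
    · subst ht1; rw [(H.eval s).target]; exact hy
    have h0t : (0 : I) < t := lt_of_le_of_ne t.2.1 (fun h => ht0 h.symm)
    have ht1' : t < (1 : I) := lt_of_le_of_ne t.2.2 ht1
    have claim : ∀ s' ∈ S, H.eval s' t ∈ diamIn P U x y := by
      intro s' hs'
      refine ⟨((H.eval s').restrictTo 0 t).cast (H.eval s').source.symm rfl,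
        ((H.eval s').restrictTo t 1).cast rfl (H.eval s').target.symm, ?_, ?_, ?_, ?_⟩
      · exact castMem18 P _ _ _ (hrestrict (H.eval s') (hP s') 0 t h0t)
      · exact castMem18 P _ _ _ (hrestrict (H.eval s') (hP s') t 1 ht1')
      · intro u
        rw [show (((H.eval s').restrictTo 0 t).cast (H.eval s').source.symm rfl) u
            = ((H.eval s').restrictTo 0 t) u from congrFun (Path.cast_coe _ _ _) u]
        exact hs' _
      · intro u
        rw [show (((H.eval s').restrictTo t 1).cast rfl (H.eval s').target.symm) u
            = ((H.eval s').restrictTo t 1) u from congrFun (Path.cast_coe _ _ _) u]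
        exact hs' _
    have fcont : Continuous (fun s' : I => H.eval s' t) := by
      simp only [heq]
      exact H.toHomotopy.continuous.comp (continuous_id.prodMk continuous_const)
    have hsub : closure S ⊆ (fun s' : I => H.eval s' t) ⁻¹' closure (diamIn P U x y) :=
      closure_minimal (fun s' hs' => subset_closure (claim s' hs'))
        (isClosed_closure.preimage fcont)
    exact hclos (hsub hs)
  have h0S : (0 : I) ∈ S := by
    intro t
    rw [Path.Homotopy.eval_zero]
    exact hcU t
  have huniv : S = Set.univ := IsClopen.eq_univ ⟨hSclosed, hSopen⟩ ⟨0, h0S⟩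
  intro s t
  have : s ∈ S := huniv ▸ Set.mem_univ s
  exact this t

end AuxStmt18

/-- if in the open set `U` timelike homotopy classes between fixed
endpoints are unique, `c` is a timelike path in `U` from `x` to `y`, and the
closure (in `X`) of `I_U(x,y)` is contained in `U`, then every timelike homotopy
rel endpoints in `X` starting at `c` stays in `U`; consequently
`I_X([c]) = I_U(x,y)`. -/
theorem stmt18 {X : Type*} [TopologicalSpace X] (P : ∀ x y : X, Set (Path x y))
    (htrans : ∀ {x y z : X} (a : Path x y) (b : Path y z),
      a ∈ P x y → b ∈ P y z → a.trans b ∈ P x z)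
    (hrestrict : ∀ {x y : X} (c : Path x y), c ∈ P x y →
      ∀ s t : I, s < t → c.restrictTo s t ∈ P (c s) (c t))
    (U : Set X) (hUopen : IsOpen U)
    -- at most one timelike homotopy class in `U` between any two points
    (huniq : ∀ (w z : X) (a b : Path w z), a ∈ P w z → b ∈ P w z →
      (∀ t, a t ∈ U) → (∀ t, b t ∈ U) →
      ∃ H : Path.Homotopy a b, ∀ s : I, H.eval s ∈ P w z ∧ ∀ t, H.eval s t ∈ U)
    {x y : X} (c : Path x y) (hc : c ∈ P x y) (hcU : ∀ t, c t ∈ U)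
    (hclos : closure (diamIn P U x y) ⊆ U) :
    (∀ (d : Path x y) (H : Path.Homotopy c d),
      (∀ s : I, H.eval s ∈ P x y) → ∀ s t : I, H.eval s t ∈ U) ∧
    diam P c = diamIn P U x y := by
  have hx : x ∈ U := by have := hcU 0; rwa [c.source] at this
  have hy : y ∈ U := by have := hcU 1; rwa [c.target] at this
  have key : ∀ (d : Path x y) (H : Path.Homotopy c d),
      (∀ s : I, H.eval s ∈ P x y) → ∀ s t : I, H.eval s t ∈ U :=
    fun d H hP => key18 P @hrestrict U hUopen c hcU hclos d H hP
  refine ⟨key, ?_⟩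
  ext z
  constructor
  · rintro ⟨a, b, ha, hb, H, hH⟩
    have hP' : ∀ s : I, H.symm.eval s ∈ P x y := by
      intro s
      have : H.symm.eval s = H.eval (symm s) := by
        ext t; rfl
      rw [this]; exact hH _
    have hall : ∀ s t : I, H.symm.eval s t ∈ U := key _ H.symm hP'
    have htrU : ∀ t, (a.trans b) t ∈ U := by
      intro t
      have h1 : H.symm.eval 1 = a.trans b := Path.Homotopy.eval_one _
      have := hall 1 t
      rwa [h1] at this
    have hrange : Set.range (a.trans b) ⊆ U := by
      rintro _ ⟨t, rfl⟩; exact htrU t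
    exact ⟨a, b, ha, hb,
      fun t => (by
        have := Path.trans_range a b
        exact hrange (this ▸ Set.mem_union_left _ ⟨t, rfl⟩)),
      fun t => (by
        have := Path.trans_range a b
        exact hrange (this ▸ Set.mem_union_right _ ⟨t, rfl⟩))⟩
  · rintro ⟨a, b, ha, hb, haU, hbU⟩
    have htrP : a.trans b ∈ P x y := htrans a b ha hb
    have htrU : ∀ t, (a.trans b) t ∈ U := by
      intro t
      have := Path.trans_range a b
      have hmem : (a.trans b) t ∈ Set.range (a.trans b) := ⟨t, rfl⟩
      rw [this] at hmem
      rcases hmem with ⟨u, hu⟩ | ⟨u, hu⟩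
      · rw [← hu]; exact haU u
      · rw [← hu]; exact hbU u
    obtain ⟨H, hH⟩ := huniq x y (a.trans b) c htrP hc htrU hcU
    exact ⟨a, b, ha, hb, H, fun s => (hH s).1⟩
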